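/- Let ħ > 0, let N ≥ 1, let w_1, …, w_N be positive reals, and let Ĥ : ℝ² → ℂ^{2×2} be continuously differentiable with Ĥ(q,p) Hermitian for every (q,p). Suppose differentiable curves q_a, p_a : ℝ → ℝ and ρ_a : ℝ → ℂ^{2×2} (a = 1, …, N) satisfy the multi-trajectory Ehrenfest equations: q_a'(t) = Re Tr(ρ_a(t)·∂_p Ĥ(q_a(t), p_a(t))), p_a'(t) = −Re Tr(ρ_a(t)·∂_q Ĥ(q_a(t), p_a(t))), and iħ·ρ_a'(t) = [Ĥ(q_a(t), p_a(t)), ρ_a(t)]. Then the total energy h(t) := Σ_{a=1}^N w_a · Re Tr(ρ_a(t)·Ĥ(q_a(t), p_a(t))) is constant in t. -/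

import Mathlib

open Matrix Complex

attribute [local instance] Matrix.normedAddCommGroup Matrix.normedSpace

noncomputable abbrev M2' := Matrix (Fin 2) (Fin 2) ℂ

noncomputable def trL : M2' →L[ℝ] ℝ :=
  Complex.reCLM.comp (LinearMap.toContinuousLinearMap
    ((Matrix.traceLinearMap (Fin 2) ℂ ℂ).restrictScalars ℝ))

lemma trL_apply (A : M2') : trL A = A.trace.re := rfl

noncomputable def mulL : M2' →L[ℝ] M2' →L[ℝ] M2' :=
  LinearMap.toContinuousLinearMap
    { toFun := fun A => LinearMap.toContinuousLinearMap (LinearMap.mulLeft ℝ A)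
      map_add' := by intros; ext; simp [add_mul]
      map_smul' := by intros; ext; simp [smul_mul_assoc] }

lemma mulL_apply (A B : M2') : mulL A B = A * B := rfl

/-- Conservation of the total energy
`h(t) = Σ_a w_a · Re Tr(ρ_a(t)·Ĥ(q_a(t), p_a(t)))` along the multi-trajectory
Ehrenfest equations.  Here `∂_q Ĥ` and `∂_p Ĥ` are realized as the Fréchet
derivative of `Ĥ : ℝ × ℝ → ℂ^{2×2}` applied to the directions `(1,0)` and
`(0,1)` respectively. -/
theorem ehrenfest_energy_conservation
    (hbar : ℝ) (hhbar : 0 < hbar)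
    (N : ℕ) (hN : 1 ≤ N)
    (w : Fin N → ℝ) (hw : ∀ a, 0 < w a)
    (Hh : ℝ × ℝ → Matrix (Fin 2) (Fin 2) ℂ)
    (hHsmooth : ContDiff ℝ 1 Hh)
    (hHherm : ∀ z, (Hh z).IsHermitian)
    (q p : Fin N → ℝ → ℝ)
    (ρ : Fin N → ℝ → Matrix (Fin 2) (Fin 2) ℂ)
    (hq : ∀ a, Differentiable ℝ (q a))
    (hp : ∀ a, Differentiable ℝ (p a))
    (hρ : ∀ a, Differentiable ℝ (ρ a))
    (heq_q : ∀ a t, deriv (q a) t =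
      ((ρ a t * fderiv ℝ Hh (q a t, p a t) ((0 : ℝ), (1 : ℝ))).trace).re)
    (heq_p : ∀ a t, deriv (p a) t =
      -((ρ a t * fderiv ℝ Hh (q a t, p a t) ((1 : ℝ), (0 : ℝ))).trace).re)
    (heq_ρ : ∀ a t, (Complex.I * (hbar : ℂ)) • deriv (ρ a) t =
      Hh (q a t, p a t) * ρ a t - ρ a t * Hh (q a t, p a t)) :
    ∀ s t : ℝ,
      ∑ a, w a * ((ρ a s * Hh (q a s, p a s)).trace).re
        = ∑ a, w a * ((ρ a t * Hh (q a t, p a t)).trace).re := by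
  -- each trajectory conserves its energy
  have key : ∀ (a : Fin N) (t : ℝ),
      HasDerivAt (fun t => ((ρ a t * Hh (q a t, p a t)).trace).re) 0 t := by
    intro a t
    set z := (q a t, p a t) with hz
    have hρ' : HasDerivAt (ρ a) (deriv (ρ a) t) t := ((hρ a) t).hasDerivAt
    have hqp : HasDerivAt (fun t => (q a t, p a t))
        (deriv (q a) t, deriv (p a) t) t :=
      ((hq a t).hasDerivAt).prodMk ((hp a t).hasDerivAt)
    have hH : HasDerivAt (fun t => Hh (q a t, p a t))
        (fderiv ℝ Hh z (deriv (q a) t, deriv (p a) t)) t :=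
      (((hHsmooth.differentiable one_ne_zero) z).hasFDerivAt).comp_hasDerivAt t hqp
    letI : NormedAddCommGroup (M2' →L[ℝ] M2') := ContinuousLinearMap.toNormedAddCommGroup
    letI : NormedSpace ℝ (M2' →L[ℝ] M2') := ContinuousLinearMap.toNormedSpace
    have hc : HasDerivAt (fun t => mulL (ρ a t)) (mulL (deriv (ρ a) t)) t :=
      (mulL.hasFDerivAt (x := ρ a t)).comp_hasDerivAt t hρ'
    have hmul : HasDerivAt (fun t => ρ a t * Hh (q a t, p a t))
        (deriv (ρ a) t * Hh z + ρ a t * fderiv ℝ Hh z (deriv (q a) t, deriv (p a) t)) t := by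
      have := hc.clm_apply hH
      exact this
    have htr := trL.hasFDerivAt.comp_hasDerivAt t hmul
    have hzero : trL (deriv (ρ a) t * Hh z
        + ρ a t * fderiv ℝ Hh z (deriv (q a) t, deriv (p a) t)) = 0 := by
      rw [map_add]
      -- first part: commutator term
      have h1 : (deriv (ρ a) t * Hh z).trace = 0 := by
        have hne : (Complex.I * (hbar : ℂ)) ≠ 0 := by
          simp [Complex.ext_iff, hhbar.ne']
        have h := congrArg (fun M => (M * Hh z).trace) (heq_ρ a t)
        rw [← hz] at h
        simp only [smul_mul_assoc, trace_smul, sub_mul, trace_sub] at h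
        rw [trace_mul_cycle (ρ a t) (Hh z) (Hh z)] at h
        simp only [sub_self] at h
        exact (smul_eq_zero.mp h).resolve_left hne
      -- second part: gradient terms
      have h2 : trL (ρ a t * fderiv ℝ Hh z (deriv (q a) t, deriv (p a) t)) = 0 := by
        have hvec : ((deriv (q a) t, deriv (p a) t) : ℝ × ℝ)
            = deriv (q a) t • ((1 : ℝ), (0 : ℝ)) + deriv (p a) t • ((0 : ℝ), (1 : ℝ)) := by
          simp [Prod.ext_iff]
        have hD : fderiv ℝ Hh z (deriv (q a) t, deriv (p a) t)
            = deriv (q a) t • fderiv ℝ Hh z ((1 : ℝ), (0 : ℝ))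
              + deriv (p a) t • fderiv ℝ Hh z ((0 : ℝ), (1 : ℝ)) := by
          rw [hvec, (fderiv ℝ Hh z).map_add, (fderiv ℝ Hh z).map_smul,
            (fderiv ℝ Hh z).map_smul]
        rw [hD, mul_add, mul_smul_comm, mul_smul_comm, trL.map_add,
          trL.map_smul, trL.map_smul]
        rw [trL_apply, trL_apply]
        have hq' : ((ρ a t * fderiv ℝ Hh z ((0 : ℝ), (1 : ℝ))).trace).re
            = deriv (q a) t := by rw [heq_q a t, hz]
        have hp' : ((ρ a t * fderiv ℝ Hh z ((1 : ℝ), (0 : ℝ))).trace).re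
            = -(deriv (p a) t) := by rw [heq_p a t, hz]; ring
        rw [hq', hp']
        simp [smul_eq_mul]; ring
      rw [h2, trL_apply, h1]
      simp
    erw [hzero] at htr
    exact htr
  have hconst : ∀ (a : Fin N) (s t : ℝ),
      ((ρ a s * Hh (q a s, p a s)).trace).re = ((ρ a t * Hh (q a t, p a t)).trace).re := by
    intro a s t
    exact is_const_of_deriv_eq_zero (fun x => (key a x).differentiableAt)
      (fun x => (key a x).deriv) s t
  intro s t
  exact Finset.sum_congr rfl fun a _ => by rw [hconst a s t]
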